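/- Let H be a complex Hilbert space, L : H → H a bounded self-adjoint operator, and (P_n) a sequence of orthogonal projections P_n : H → V_n onto closed subspaces V_n ⊆ H such that P_n* P_n converges strongly to the identity. Then for every continuous function f : ℝ → ℂ, the operators P_n* f(P_n L P_n*) P_n converge strongly to f(L) as n → ∞, where f(·) denotes the continuous functional calculus applied to the bounded self-adjoint operators P_n L P_n* and L. In other words, the projection-valued spectral measures of P_n L P_n* (pushed forward to H via P_n*) converge weakly, in the strong operator topology, to the projection-valued spectral measure of L. -/

import Mathlib

open MeasureTheory Filter

/-- The continuous functional calculus instance for bounded operators on a Hilbert space,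
made available for operators on (complete) subspaces as well. -/
noncomputable local instance cfcCLM {E : Type*} [NormedAddCommGroup E] [InnerProductSpace ℂ E]
    [CompleteSpace E] : ContinuousFunctionalCalculus ℂ (E →L[ℂ] E) IsStarNormal :=
  inferInstance

/-- The compression `P L P*` of a bounded operator `L` to a closed subspace `V`,
where `P` is the orthogonal projection of `H` onto `V` and `P*` its adjoint
(the inclusion of `V` into `H`). -/
noncomputable def compressOp {H : Type*} [NormedAddCommGroup H] [InnerProductSpace ℂ H]
    (L : H →L[ℂ] H) (V : Submodule ℂ H) [Submodule.HasOrthogonalProjection V] : V →L[ℂ] V :=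
  (V.orthogonalProjectionOnto).comp (L.comp V.subtypeL)

/-- For a bounded self-adjoint operator `A` and `f : ℝ → ℂ` continuous, `f(A)` is obtained
from the continuous functional calculus; since the spectrum of `A` is real, this is the
(complex) continuous functional calculus applied to `z ↦ f (Re z)`. -/
noncomputable def cfcSelfAdjoint {E : Type*} [NormedAddCommGroup E] [InnerProductSpace ℂ E]
    [CompleteSpace E] (f : ℝ → ℂ) (A : E →L[ℂ] E) : E →L[ℂ] E :=
  cfc (fun z : ℂ => f z.re) A

section Helpers

variable {H : Type*} [NormedAddCommGroup H] [InnerProductSpace ℂ H] [CompleteSpace H]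

noncomputable def projOp (V : Submodule ℂ H) [CompleteSpace V] : H →L[ℂ] H :=
  V.subtypeL.comp (V.orthogonalProjectionOnto)

lemma projOp_apply (V : Submodule ℂ H) [CompleteSpace V] (u : H) :
    projOp V u = ((V.orthogonalProjectionOnto u : V) : H) := rfl

lemma norm_projOp_apply_le (V : Submodule ℂ H) [CompleteSpace V] (u : H) :
    ‖projOp V u‖ ≤ ‖u‖ := by
  have h1 : ‖projOp V u‖ = ‖V.orthogonalProjectionOnto u‖ := rfl
  rw [h1]
  calc ‖V.orthogonalProjectionOnto u‖ ≤ ‖(V.orthogonalProjectionOnto : H →L[ℂ] V)‖ * ‖u‖ :=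
        (V.orthogonalProjectionOnto).le_opNorm u
    _ ≤ 1 * ‖u‖ :=
        mul_le_mul_of_nonneg_right (Submodule.orthogonalProjectionOnto_norm_le V) (norm_nonneg u)
    _ = ‖u‖ := one_mul _

lemma compress_isSelfAdjoint (L : H →L[ℂ] H) (hL : IsSelfAdjoint L) (V : Submodule ℂ H)
    [CompleteSpace V] : IsSelfAdjoint (compressOp L V) := by
  rw [IsSelfAdjoint, ContinuousLinearMap.star_eq_adjoint, compressOp,
    ContinuousLinearMap.adjoint_comp, ContinuousLinearMap.adjoint_comp,
    V.adjoint_orthogonalProjectionOnto, V.adjoint_subtypeL, hL.adjoint_eq,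
    ContinuousLinearMap.comp_assoc]

lemma norm_compress_le (L : H →L[ℂ] H) (V : Submodule ℂ H) [CompleteSpace V] :
    ‖compressOp L V‖ ≤ ‖L‖ := by
  calc ‖compressOp L V‖ ≤ ‖(V.orthogonalProjectionOnto : H →L[ℂ] V)‖ * ‖L.comp V.subtypeL‖ :=
        ContinuousLinearMap.opNorm_comp_le _ _
    _ ≤ 1 * (‖L‖ * ‖V.subtypeL‖) :=
        mul_le_mul (Submodule.orthogonalProjectionOnto_norm_le V) (ContinuousLinearMap.opNorm_comp_le _ _)
          (norm_nonneg (L.comp V.subtypeL)) zero_le_one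
    _ ≤ 1 * (‖L‖ * 1) := by
        have := Submodule.norm_subtypeL_le V
        have := norm_nonneg L
        nlinarith
    _ = ‖L‖ := by ring

lemma subtypeL_compress_pow (L : H →L[ℂ] H) (V : Submodule ℂ H) [CompleteSpace V] (k : ℕ)
    (u : V) : ((((compressOp L V) ^ k) u : V) : H) = (((projOp V).comp L) ^ k) (u : H) := by
  induction k with
  | zero => simp
  | succ k ih =>
    rw [pow_succ', pow_succ']
    have h1 : ((compressOp L V * (compressOp L V) ^ k)) u
        = compressOp L V (((compressOp L V) ^ k) u) := rfl
    rw [h1]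
    have h2 : (((compressOp L V) (((compressOp L V) ^ k) u) : V) : H)
        = projOp V (L ((((compressOp L V) ^ k) u : V) : H)) := rfl
    rw [h2, ih]
    rfl


lemma projOp_tendsto {V : ℕ → Submodule ℂ H} [∀ n, CompleteSpace (V n)]
    (hP : ∀ u : H, Tendsto (fun n => (((V n).orthogonalProjectionOnto u : V n) : H)) atTop (nhds u))
    {xs : ℕ → H} {x : H} (hx : Tendsto xs atTop (nhds x)) :
    Tendsto (fun n => projOp (V n) (xs n)) atTop (nhds x) := by
  rw [tendsto_iff_norm_sub_tendsto_zero] at hx ⊢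
  have hPx : Tendsto (fun n => ‖projOp (V n) x - x‖) atTop (nhds 0) := by
    have := hP x
    rw [tendsto_iff_norm_sub_tendsto_zero] at this
    exact this
  refine squeeze_zero (fun n => norm_nonneg _) (fun n => ?_)
    (by simpa using hx.add hPx)
  calc ‖projOp (V n) (xs n) - x‖
      ≤ ‖projOp (V n) (xs n) - projOp (V n) x‖ + ‖projOp (V n) x - x‖ :=
        norm_sub_le_norm_sub_add_norm_sub _ _ _
    _ ≤ ‖xs n - x‖ + ‖projOp (V n) x - x‖ := by
        have : projOp (V n) (xs n) - projOp (V n) x = projOp (V n) (xs n - x) := by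
          rw [map_sub]
        rw [this]
        exact add_le_add_left (norm_projOp_apply_le _ _) _

lemma pow_tendsto (L : H →L[ℂ] H) {V : ℕ → Submodule ℂ H} [∀ n, CompleteSpace (V n)]
    (hP : ∀ u : H, Tendsto (fun n => (((V n).orthogonalProjectionOnto u : V n) : H)) atTop (nhds u))
    (v : H) (k : ℕ) :
    Tendsto (fun n => (((projOp (V n)).comp L) ^ k) (projOp (V n) v)) atTop
      (nhds ((L ^ k) v)) := by
  induction k with
  | zero => simpa using projOp_tendsto hP tendsto_const_nhds
  | succ k ih =>
    have h1 : ∀ n, (((projOp (V n)).comp L) ^ (k + 1)) (projOp (V n) v)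
        = projOp (V n) (L ((((projOp (V n)).comp L) ^ k) (projOp (V n) v))) := by
      intro n; rw [pow_succ']; rfl
    have h2 : Tendsto (fun n => L ((((projOp (V n)).comp L) ^ k) (projOp (V n) v))) atTop
        (nhds (L ((L ^ k) v))) := (L.continuous.tendsto _).comp ih
    have h3 := projOp_tendsto hP h2
    simp only [h1]
    have h4 : (L ^ (k + 1)) v = L ((L ^ k) v) := by rw [pow_succ']; rfl
    rw [h4]
    exact h3

lemma tendsto_of_approx {xs : ℕ → H} {x : H}
    (h : ∀ ε : ℝ, 0 < ε → ∃ (ys : ℕ → H) (y : H), Tendsto ys atTop (nhds y) ∧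
      (∀ n, ‖xs n - ys n‖ ≤ ε) ∧ ‖x - y‖ ≤ ε) :
    Tendsto xs atTop (nhds x) := by
  rw [Metric.tendsto_atTop]
  intro ε hε
  obtain ⟨ys, y, hy, h1, h2⟩ := h (ε / 3) (by linarith)
  obtain ⟨N, hN⟩ := (Metric.tendsto_atTop.mp hy) (ε / 3) (by linarith)
  refine ⟨N, fun n hn => ?_⟩
  have h5 := hN n hn
  calc dist (xs n) x ≤ dist (xs n) (ys n) + dist (ys n) y + dist y x := dist_triangle4 _ _ _ _
    _ < ε := by
      simp only [dist_eq_norm] at h5 ⊢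
      have h3 := h1 n
      have h4 : ‖y - x‖ ≤ ε / 3 := by rw [norm_sub_rev]; exact h2
      linarith

variable {E : Type*} [NormedAddCommGroup E] [InnerProductSpace ℂ E] [CompleteSpace E]

lemma cfcSA_poly (r : Polynomial ℂ) (A : E →L[ℂ] E) (hA : IsSelfAdjoint A) :
    cfcSelfAdjoint (fun x : ℝ => r.eval (x : ℂ)) A = Polynomial.aeval A r := by
  unfold cfcSelfAdjoint
  rw [cfc_congr (g := fun z : ℂ => r.eval z)
      (fun z hz => by simp only; rw [← hA.mem_spectrum_eq_re hz]),
    cfc_polynomial r A]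

lemma norm_cfcSA_le {A : E →L[ℂ] E} (hA : IsSelfAdjoint A) {g : ℝ → ℂ} {c : ℝ}
    (hc : 0 ≤ c) (h : ∀ x ∈ Set.Icc (-‖A‖) ‖A‖, ‖g x‖ ≤ c) : ‖cfcSelfAdjoint g A‖ ≤ c := by
  refine norm_cfc_le hc fun z hz => ?_
  refine h z.re ?_
  have h1 : ‖z‖ ≤ ‖A‖ * ‖(1 : E →L[ℂ] E)‖ := spectrum.norm_le_norm_mul_of_mem hz
  have h2 : ‖(1 : E →L[ℂ] E)‖ ≤ 1 := ContinuousLinearMap.norm_id_le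
  have h3 : |z.re| ≤ ‖z‖ := Complex.abs_re_le_norm z
  have h4 : |z.re| ≤ ‖A‖ := by nlinarith [norm_nonneg A, norm_nonneg (1 : E →L[ℂ] E)]
  exact abs_le.mp h4

lemma norm_cfcSA_sub_le {A : E →L[ℂ] E} (hA : IsSelfAdjoint A) {f g : ℝ → ℂ}
    (hf : Continuous f) (hg : Continuous g) {c : ℝ} (hc : 0 ≤ c)
    (h : ∀ x ∈ Set.Icc (-‖A‖) ‖A‖, ‖f x - g x‖ ≤ c) :
    ‖cfcSelfAdjoint f A - cfcSelfAdjoint g A‖ ≤ c := by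
  have key : cfcSelfAdjoint f A - cfcSelfAdjoint g A
      = cfcSelfAdjoint (fun x => f x - g x) A := by
    unfold cfcSelfAdjoint
    rw [cfc_sub (fun z : ℂ => f z.re) (fun z : ℂ => g z.re) A
      ((hf.comp Complex.continuous_re).continuousOn)
      ((hg.comp Complex.continuous_re).continuousOn)]
  rw [key]
  exact norm_cfcSA_le hA hc h

end Helpers

set_option maxHeartbeats 1000000 in
theorem hermitianDMD_stmt2 {H : Type*} [NormedAddCommGroup H] [InnerProductSpace ℂ H]
    [CompleteSpace H]
    (L : H →L[ℂ] H) (hL : IsSelfAdjoint L)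
    (V : ℕ → Submodule ℂ H) [∀ n, CompleteSpace (V n)]
    -- `Pₙ* Pₙ` converges strongly to the identity
    (hP : ∀ u : H, Tendsto (fun n => (((V n).orthogonalProjectionOnto u : V n) : H)) atTop (nhds u))
    (f : ℝ → ℂ) (hf : Continuous f) (v : H) :
    Tendsto
      (fun n => (V n).subtypeL
        (cfcSelfAdjoint f (compressOp L (V n)) ((V n).orthogonalProjectionOnto v)))
      atTop (nhds (cfcSelfAdjoint f L v)) := by
  set M := ‖L‖ with hM
  refine tendsto_of_approx fun ε hε => ?_
  have hvpos : (0:ℝ) < 2 * (‖v‖ + 1) := by positivity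
  set ε' := ε / (2 * (‖v‖ + 1)) with hε'def
  have hε' : 0 < ε' := by positivity
  have hεv : ε' * ‖v‖ ≤ ε := by
    rw [hε'def, div_mul_eq_mul_div, div_le_iff₀ hvpos]
    nlinarith [norm_nonneg v, hε.le]
  have hfre : Continuous fun x : Set.Icc (-M) M => (f x).re :=
    Complex.continuous_re.comp (hf.comp continuous_subtype_val)
  have hfim : Continuous fun x : Set.Icc (-M) M => (f x).im :=
    Complex.continuous_im.comp (hf.comp continuous_subtype_val)
  set F : C(Set.Icc (-M) M, ℝ) := ⟨_, hfre⟩ with hFdef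
  set G : C(Set.Icc (-M) M, ℝ) := ⟨_, hfim⟩ with hGdef
  obtain ⟨p, hp⟩ := exists_polynomial_near_continuousMap (-M) M F (ε' / 2) (by linarith)
  obtain ⟨q, hq⟩ := exists_polynomial_near_continuousMap (-M) M G (ε' / 2) (by linarith)
  set r : Polynomial ℂ := p.map (algebraMap ℝ ℂ) + Polynomial.C Complex.I * q.map (algebraMap ℝ ℂ)
    with hrdef
  set g : ℝ → ℂ := fun x => r.eval (x : ℂ) with hgdef
  have hgcont : Continuous g := (Polynomial.continuous r).comp Complex.continuous_ofReal
  have hgx : ∀ x : ℝ, g x = Complex.ofReal (p.eval x) + Complex.I * Complex.ofReal (q.eval x) := by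
    intro x
    have hx : ((x : ℂ)) = algebraMap ℝ ℂ x := rfl
    simp only [hgdef, hrdef, Polynomial.eval_add, Polynomial.eval_mul, Polynomial.eval_C,
      hx, Polynomial.eval_map, Polynomial.eval₂_at_apply]
    rfl
  have hbound : ∀ x ∈ Set.Icc (-M) M, ‖f x - g x‖ ≤ ε' := by
    intro x hx
    have hpx := le_trans (ContinuousMap.norm_coe_le_norm
      (p.toContinuousMapOn (Set.Icc (-M) M) - F) (⟨x, hx⟩ : Set.Icc (-M) M)) hp.le
    have hqx := le_trans (ContinuousMap.norm_coe_le_norm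
      (q.toContinuousMapOn (Set.Icc (-M) M) - G) (⟨x, hx⟩ : Set.Icc (-M) M)) hq.le
    rw [Real.norm_eq_abs] at hpx hqx
    simp only [ContinuousMap.sub_apply, Polynomial.toContinuousMapOn_apply,
      Polynomial.toContinuousMap_apply, hFdef, hGdef, ContinuousMap.coe_mk] at hpx hqx
    have hre : (f x - g x).re = (f x).re - p.eval x := by
      simp [hgx x, Complex.sub_re, Complex.add_re, Complex.mul_re]
    have him : (f x - g x).im = (f x).im - q.eval x := by
      simp [hgx x, Complex.sub_im, Complex.add_im, Complex.mul_im]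
    calc ‖f x - g x‖ ≤ |(f x - g x).re| + |(f x - g x).im| :=
          Complex.norm_le_abs_re_add_abs_im _
      _ ≤ ε' / 2 + ε' / 2 := by
          rw [hre, him]
          gcongr
          · rw [abs_sub_comm]; exact hpx
          · rw [abs_sub_comm]; exact hqx
      _ = ε' := by ring
  have hAn : ∀ n, IsSelfAdjoint (compressOp L (V n)) := fun n =>
    compress_isSelfAdjoint L hL (V n)
  have hIccsub : ∀ (n : ℕ), ∀ x ∈ Set.Icc (-‖compressOp L (V n)‖) ‖compressOp L (V n)‖,
      x ∈ Set.Icc (-M) M := by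
    intro n x hx
    have h := norm_compress_le L (V n)
    exact ⟨by linarith [hx.1], by linarith [hx.2]⟩
  have hnormdiff : ∀ n,
      ‖cfcSelfAdjoint f (compressOp L (V n)) - cfcSelfAdjoint g (compressOp L (V n))‖ ≤ ε' :=
    fun n => norm_cfcSA_sub_le (hAn n) hf hgcont hε'.le fun x hx => hbound x (hIccsub n x hx)
  have hnormdiffL : ‖cfcSelfAdjoint f L - cfcSelfAdjoint g L‖ ≤ ε' :=
    norm_cfcSA_sub_le hL hf hgcont hε'.le fun x hx => hbound x hx
  refine ⟨fun n => (V n).subtypeL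
      (cfcSelfAdjoint g (compressOp L (V n)) ((V n).orthogonalProjectionOnto v)),
    cfcSelfAdjoint g L v, ?_, ?_, ?_⟩
  · -- convergence for the polynomial g
    have hred : ∀ n, (V n).subtypeL
        (cfcSelfAdjoint g (compressOp L (V n)) ((V n).orthogonalProjectionOnto v))
        = ∑ i ∈ Finset.range (r.natDegree + 1), r.coeff i •
            ((((projOp (V n)).comp L) ^ i) (projOp (V n) v)) := by
      intro n
      rw [show cfcSelfAdjoint g (compressOp L (V n)) = Polynomial.aeval (compressOp L (V n)) r
        from cfcSA_poly r _ (hAn n)]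
      rw [Polynomial.aeval_eq_sum_range, ContinuousLinearMap.sum_apply, map_sum]
      refine Finset.sum_congr rfl fun i _ => ?_
      rw [ContinuousLinearMap.smul_apply, ContinuousLinearMap.map_smul]
      congr 1
      exact subtypeL_compress_pow L (V n) i _
    have hy : (cfcSelfAdjoint g L v)
        = ∑ i ∈ Finset.range (r.natDegree + 1), r.coeff i • ((L ^ i) v) := by
      rw [show cfcSelfAdjoint g L = Polynomial.aeval L r from cfcSA_poly r L hL,
        Polynomial.aeval_eq_sum_range, ContinuousLinearMap.sum_apply]
      refine Finset.sum_congr rfl fun i _ => ?_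
      rw [ContinuousLinearMap.smul_apply]
    simp only [hred]
    rw [hy]
    exact tendsto_finset_sum _ fun i _ => (pow_tendsto L hP v i).const_smul (r.coeff i)
  · -- uniform bound between f and g terms
    intro n
    set A := compressOp L (V n)
    set u := (V n).orthogonalProjectionOnto v
    have h1 : (V n).subtypeL (cfcSelfAdjoint f A u) - (V n).subtypeL (cfcSelfAdjoint g A u)
        = (V n).subtypeL ((cfcSelfAdjoint f A - cfcSelfAdjoint g A) u) := by
      rw [ContinuousLinearMap.sub_apply, map_sub]
    rw [h1]
    have h2 : ‖(V n).subtypeL ((cfcSelfAdjoint f A - cfcSelfAdjoint g A) u)‖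
        = ‖(cfcSelfAdjoint f A - cfcSelfAdjoint g A) u‖ := rfl
    rw [h2]
    have h3 : ‖u‖ ≤ ‖v‖ := by
      have := norm_projOp_apply_le (V n) v
      exact this
    calc ‖(cfcSelfAdjoint f A - cfcSelfAdjoint g A) u‖
        ≤ ‖cfcSelfAdjoint f A - cfcSelfAdjoint g A‖ * ‖u‖ :=
          ContinuousLinearMap.le_opNorm _ _
      _ ≤ ε' * ‖v‖ := mul_le_mul (hnormdiff n) h3 (norm_nonneg _) hε'.le
      _ ≤ ε := hεv
  · -- bound for the limit
    have h1 : cfcSelfAdjoint f L v - cfcSelfAdjoint g L v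
        = (cfcSelfAdjoint f L - cfcSelfAdjoint g L) v := by
      rw [ContinuousLinearMap.sub_apply]
    rw [h1]
    calc ‖(cfcSelfAdjoint f L - cfcSelfAdjoint g L) v‖
        ≤ ‖cfcSelfAdjoint f L - cfcSelfAdjoint g L‖ * ‖v‖ :=
          ContinuousLinearMap.le_opNorm _ _
      _ ≤ ε' * ‖v‖ := mul_le_mul_of_nonneg_right hnormdiffL (norm_nonneg v)
      _ ≤ ε := hεv
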